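/- Let φ : X → Y be a continuous surjection between Hausdorff spaces with X locally compact. Then φ is semi-open if and only if the preimage φ⁻¹[A] of every residual subset A of Y is residual in X. -/

import Mathlib

/-- A continuous surjection `g : A → B` is *semi-open* if for every nonempty open set
`U ⊆ A`, the interior of the image `g '' U` is nonempty. -/
def SemiOpen {A B : Type*} [TopologicalSpace A] [TopologicalSpace B] (g : A → B) : Prop :=
  ∀ U : Set A, IsOpen U → U.Nonempty → (interior (g '' U)).Nonempty

/-- Lemma 2(b). A continuous surjection `φ : X → Y` of Hausdorff spaces with `X` locally
compact is semi-open iff the preimage of every residual (comeagre) subset of `Y` is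
residual in `X`. -/
theorem semiOpen_iff_preimage_residual
    {X Y : Type*} [TopologicalSpace X] [T2Space X] [LocallyCompactSpace X]
    [TopologicalSpace Y] [T2Space Y]
    {φ : X → Y} (hc : Continuous φ) (hs : Function.Surjective φ) :
    SemiOpen φ ↔ ∀ A : Set Y, A ∈ residual Y → φ ⁻¹' A ∈ residual X := by
  constructor
  · -- semi-open ⇒ preimages of residual are residual
    intro hso A hA
    rw [mem_residual_iff] at hA
    obtain ⟨S, hSo, hSd, hScnt, hSsub⟩ := hA
    have : ⋂₀ ((fun t => φ ⁻¹' t) '' S) ⊆ φ ⁻¹' A := by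
      intro x hx
      apply hSsub
      intro t ht
      exact hx _ (Set.mem_image_of_mem _ ht)
    refine Filter.mem_of_superset ?_ this
    refine (countable_sInter_mem (hScnt.image _)).2 ?_
    rintro _ ⟨t, htS, rfl⟩
    apply residual_of_dense_open (hc.isOpen_preimage _ (hSo t htS))
    -- density of φ ⁻¹' t
    rw [dense_iff_inter_open]
    intro U hU hUne
    by_contra hemp
    rw [Set.not_nonempty_iff_eq_empty] at hemp
    obtain ⟨y, hy⟩ := hso U hU hUne
    have hsubc : φ '' U ⊆ tᶜ := by
      rintro z ⟨x, hxU, rfl⟩ hzt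
      have : x ∈ U ∩ φ ⁻¹' t := ⟨hxU, hzt⟩
      rw [hemp] at this
      exact this
    have : y ∈ interior tᶜ := interior_mono hsubc hy
    rw [interior_compl] at this
    exact this ((hSd t htS).closure_eq ▸ Set.mem_univ y)
  · -- preimages of residual sets residual ⇒ semi-open
    intro h U hU hUne
    by_contra hemp
    rw [Set.not_nonempty_iff_eq_empty] at hemp
    obtain ⟨x, hxU⟩ := hUne
    obtain ⟨K, hKc, hxK, hKU⟩ := exists_compact_subset hU hxU
    have hKcl : IsClosed (φ '' K) := (hKc.image hc).isClosed
    have hKint : interior (φ '' K) = ∅ := by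
      have := interior_mono (Set.image_mono hKU : φ '' K ⊆ φ '' U)
      rw [hemp] at this
      exact Set.subset_empty_iff.1 this
    have hdense : Dense (φ '' K)ᶜ := interior_eq_empty_iff_dense_compl.1 hKint
    have hres := h _ (residual_of_dense_open hKcl.isOpen_compl hdense)
    have hd : Dense (φ ⁻¹' (φ '' K)ᶜ) := dense_of_mem_residual hres
    obtain ⟨z, hz1, hz2⟩ := hd.inter_open_nonempty (interior K) isOpen_interior ⟨x, hxK⟩
    exact hz2 ⟨z, interior_subset hz1, rfl⟩
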